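/- An R-module M is arithmetical if and only if for all submodules K, L, N of M with N finitely generated, ((K + L) :_R N) = (K :_R N) + (L :_R N). -/

import Mathlib

open Submodule LocalizedModule

section aux
variable {R : Type*} [CommRing R] {M : Type*} [AddCommGroup M] [Module R M]

lemma mem_localized_iff (p : Submonoid R) (K : Submodule R M) (a : M) :
    LocalizedModule.mk a (1 : p) ∈ K.localized p ↔ ∃ s : p, (s : R) • a ∈ K := by
  rw [Submodule.mem_localized']
  constructor
  · rintro ⟨k, hk, s, hmk⟩
    rw [← IsLocalizedModule.mk_eq_mk'] at hmk
    rw [LocalizedModule.mk_eq] at hmk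
    obtain ⟨u, hu⟩ := hmk
    refine ⟨u * s, ?_⟩
    have : (u : R) • (s : R) • a ∈ K := by
      rw [← Submonoid.smul_def, ← Submonoid.smul_def, ← hu]
      exact K.smul_mem _ (K.smul_mem _ hk)
    simpa [mul_smul] using this
  · rintro ⟨s, hs⟩
    refine ⟨(s : R) • a, hs, s, ?_⟩
    rw [← IsLocalizedModule.mk_eq_mk']
    rw [show (s : R) • a = s • a from rfl, LocalizedModule.mk_cancel]

lemma exists_common_denom (p : Submonoid R) (L : Submodule R M) (T : Finset M) (f : M → M)
    (h : ∀ n ∈ T, ∃ s : p, (s : R) • f n ∈ L) :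
    ∃ s : p, ∀ n ∈ T, (s : R) • f n ∈ L := by
  classical
  induction T using Finset.induction_on with
  | empty => exact ⟨1, by simp⟩
  | @insert a T ha ih =>
    obtain ⟨s, hs⟩ := ih (fun n hn => h n (Finset.mem_insert_of_mem hn))
    obtain ⟨t, ht⟩ := h a (Finset.mem_insert_self _ _)
    refine ⟨s * t, fun n hn => ?_⟩
    rcases Finset.mem_insert.1 hn with rfl | hn
    · have := L.smul_mem (s : R) ht
      simpa [mul_smul] using this
    · have := L.smul_mem (t : R) (hs n hn)
      rw [Submonoid.coe_mul, mul_comm]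
      simpa [mul_smul] using this

lemma key_step (p : Submonoid R) (K L : Submodule R M) (T : Finset M) (r : R)
    (hloc : K.localized p ≤ L.localized p)
    (hr : r ∈ (K ⊔ L).colon (span R (T : Set M))) :
    ∃ s : p, (s : R) * r ∈ L.colon (span R (T : Set M)) := by
  have h1 : ∀ n ∈ T, ∃ s : p, (s : R) • (r • n) ∈ L := by
    intro n hn
    have hrn : r • n ∈ K ⊔ L :=
      Submodule.mem_colon.1 hr n (Submodule.subset_span hn)
    obtain ⟨k, hk, l, hl, hkl⟩ := Submodule.mem_sup.1 hrn
    have hkloc : LocalizedModule.mk k (1 : p) ∈ L.localized p := by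
      apply hloc
      exact (mem_localized_iff p K k).2 ⟨1, by simpa using hk⟩
    obtain ⟨s, hs⟩ := (mem_localized_iff p L k).1 hkloc
    refine ⟨s, ?_⟩
    rw [← hkl, smul_add]
    exact L.add_mem hs (L.smul_mem _ hl)
  obtain ⟨s, hs⟩ := exists_common_denom p L T (r • ·) h1
  refine ⟨s, ?_⟩
  rw [Submodule.mem_colon']
  rw [SetLike.coe_subset_coe, Submodule.span_le]
  intro n hn
  have := hs n hn
  simpa [mul_smul] using this

end aux

theorem arithmetical_iff_colon_sup
    {R : Type*} [CommRing R] {M : Type*} [AddCommGroup M] [Module R M] :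
    (∀ (m : Ideal R) [m.IsMaximal],
        ∀ K L : Submodule (Localization m.primeCompl)
          (LocalizedModule m.primeCompl M), K ≤ L ∨ L ≤ K) ↔
      (∀ K L N : Submodule R M, N.FG →
        (K ⊔ L).colon N = K.colon N + L.colon N) := by
  constructor
  · intro hA K L N hN
    obtain ⟨T, rfl⟩ := hN
    classical
    apply le_antisymm
    · intro r hr
      by_contra hrC
      set C : Ideal R := (K.colon (span R (T : Set M))) + (L.colon (span R (T : Set M))) with hC
      have h1 : (1 : R) ∉ Submodule.comap (LinearMap.toSpanSingleton R R r) C := by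
        simp only [Submodule.mem_comap, LinearMap.toSpanSingleton_apply, one_smul]
        exact hrC
      have hJ : Submodule.comap (LinearMap.toSpanSingleton R R r) C ≠ ⊤ := by
        intro h; rw [h] at h1; exact h1 trivial
      obtain ⟨m, hm, hJm⟩ := Ideal.exists_le_maximal _ hJ
      rcases hA m (K.localized m.primeCompl) (L.localized m.primeCompl) with hKL | hLK
      · obtain ⟨s, hs⟩ := key_step m.primeCompl K L T r hKL hr
        have hmem : (s : R) ∈ Submodule.comap (LinearMap.toSpanSingleton R R r) C := by
          simp only [Submodule.mem_comap, LinearMap.toSpanSingleton_apply, smul_eq_mul]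
          exact Submodule.mem_sup_right hs
        exact s.2 (hJm hmem)
      · have hr' : r ∈ (L ⊔ K).colon (span R (T : Set M)) := by rwa [sup_comm]
        obtain ⟨s, hs⟩ := key_step m.primeCompl L K T r hLK hr'
        have hmem : (s : R) ∈ Submodule.comap (LinearMap.toSpanSingleton R R r) C := by
          simp only [Submodule.mem_comap, LinearMap.toSpanSingleton_apply, smul_eq_mul]
          exact Submodule.mem_sup_left hs
        exact s.2 (hJm hmem)
    · apply sup_le
      · exact fun r hr => Submodule.mem_colon.2 fun n hn =>
          Submodule.mem_sup_left (Submodule.mem_colon.1 hr n hn)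
      · exact fun r hr => Submodule.mem_colon.2 fun n hn =>
          Submodule.mem_sup_right (Submodule.mem_colon.1 hr n hn)
  · intro h m hm K L
    -- cyclic comparability
    have span_mk : ∀ (a : M) (s : m.primeCompl),
        (span (Localization m.primeCompl) {LocalizedModule.mk a s} :
          Submodule (Localization m.primeCompl) (LocalizedModule m.primeCompl M))
          = span (Localization m.primeCompl) {LocalizedModule.mk a (1 : m.primeCompl)} := by
      intro a s
      apply le_antisymm <;> rw [Submodule.span_le, Set.singleton_subset_iff] <;>
        rw [SetLike.mem_coe, Submodule.mem_span_singleton]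
      · exact ⟨Localization.mk 1 s, by rw [LocalizedModule.mk_smul_mk, one_smul, mul_one]⟩
      · exact ⟨Localization.mk (s : R) 1, by
          rw [LocalizedModule.mk_smul_mk, one_mul, show (s : R) • a = s • a from rfl,
            LocalizedModule.mk_cancel]⟩
    have cyc : ∀ x y : LocalizedModule m.primeCompl M,
        x ∈ span (Localization m.primeCompl) {y} ∨
          y ∈ span (Localization m.primeCompl) {x} := by
      have cyc1 : ∀ a b : M,
          LocalizedModule.mk a (1 : m.primeCompl) ∈
            span (Localization m.primeCompl) {LocalizedModule.mk b (1 : m.primeCompl)} ∨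
          LocalizedModule.mk b (1 : m.primeCompl) ∈
            span (Localization m.primeCompl) {LocalizedModule.mk a (1 : m.primeCompl)} := by
        intro a b
        have htop : ((span R {a} ⊔ span R {b}).colon (span R {a, b})) = ⊤ := by
          rw [eq_top_iff]
          intro r _
          refine Submodule.mem_colon.2 fun n hn => ?_
          have : span R ({a, b} : Set M) ≤ span R {a} ⊔ span R {b} := by
            rw [← Submodule.span_union, Set.insert_eq]
          exact Submodule.smul_mem _ _ (this hn)
        have hfg : (span R ({a, b} : Set M)).FG :=
          Submodule.fg_span ((Set.finite_singleton b).insert a)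
        have hsum := h (span R {a}) (span R {b}) (span R {a, b}) hfg
        rw [htop] at hsum
        have h1 : (1 : R) ∈ (span R ({a} : Set M)).colon (span R {a, b}) +
            (span R ({b} : Set M)).colon (span R {a, b}) := by rw [← hsum]; trivial
        obtain ⟨u, hu, v, hv, huv⟩ := Submodule.mem_sup.1 h1
        have hcase : u ∉ m ∨ v ∉ m := by
          by_contra hc
          push_neg at hc
          have : (1 : R) ∈ m := huv ▸ m.add_mem hc.1 hc.2
          exact hm.ne_top (m.eq_top_of_isUnit_mem this isUnit_one)
        have key : ∀ (u : R), u ∉ m → ∀ c d : M,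
            u • d ∈ span R ({c} : Set M) →
            LocalizedModule.mk d (1 : m.primeCompl) ∈
              span (Localization m.primeCompl)
                {LocalizedModule.mk c (1 : m.primeCompl)} := by
          intro u hu c d hud
          obtain ⟨e, he⟩ := Submodule.mem_span_singleton.1 hud
          rw [Submodule.mem_span_singleton]
          refine ⟨Localization.mk e ⟨u, hu⟩, ?_⟩
          rw [LocalizedModule.mk_smul_mk, mul_one, he, LocalizedModule.mk_eq]
          exact ⟨1, by simp [Submonoid.smul_def]⟩
        rcases hcase with hu' | hv'
        · -- u • b ∈ span {a}
          right
          have : u • b ∈ span R ({a} : Set M) :=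
            Submodule.mem_colon.1 hu b (Submodule.subset_span (by simp))
          exact key u hu' a b this
        · left
          have : v • a ∈ span R ({b} : Set M) :=
            Submodule.mem_colon.1 hv a (Submodule.subset_span (by simp))
          exact key v hv' b a this
      intro x y
      induction x, y using LocalizedModule.induction_on₂ with
      | _ a b s t =>
        rw [span_mk b t, span_mk a s]
        have h1 : (LocalizedModule.mk a s : LocalizedModule m.primeCompl M) ∈
            span (Localization m.primeCompl) {LocalizedModule.mk a (1 : m.primeCompl)} := by
          rw [← span_mk a s]; exact Submodule.mem_span_singleton_self _
        have h2 : (LocalizedModule.mk b t : LocalizedModule m.primeCompl M) ∈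
            span (Localization m.primeCompl) {LocalizedModule.mk b (1 : m.primeCompl)} := by
          rw [← span_mk b t]; exact Submodule.mem_span_singleton_self _
        rcases cyc1 a b with hab | hba
        · left
          have : span (Localization m.primeCompl)
              ({LocalizedModule.mk a (1 : m.primeCompl)} :
                Set (LocalizedModule m.primeCompl M)) ≤
              span (Localization m.primeCompl) {LocalizedModule.mk b (1 : m.primeCompl)} := by
            rw [Submodule.span_le, Set.singleton_subset_iff]; exact hab
          exact this h1
        · right
          have : span (Localization m.primeCompl)
              ({LocalizedModule.mk b (1 : m.primeCompl)} :
                Set (LocalizedModule m.primeCompl M)) ≤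
              span (Localization m.primeCompl) {LocalizedModule.mk a (1 : m.primeCompl)} := by
            rw [Submodule.span_le, Set.singleton_subset_iff]; exact hba
          exact this h2
    rw [or_iff_not_imp_left]
    intro hKL
    obtain ⟨x, hxK, hxL⟩ := SetLike.not_le_iff_exists.1 hKL
    intro y hy
    rcases cyc x y with hx | hyx
    · exact absurd ((Submodule.span_le.2 (Set.singleton_subset_iff.2 hy)) hx) hxL
    · exact (Submodule.span_le.2 (Set.singleton_subset_iff.2 hxK)) hyx
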